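/- arXiv:1109.5996 — 2 statements merged into one kernel-verified Lean document; each statement's English description precedes it below -/
import Mathlib

section
/- Fix 1 ≤ i ≤ m. If there exists a pattern 𝒜 of size (i,m) such that the number of column-even Latin (i,m)-rectangles with pattern 𝒜 differs from the number of column-odd ones, then for every 1 ≤ i' ≤ i there exists a pattern ℬ of size (i',m) such that the number of column-even Latin (i',m)-rectangles with pattern ℬ differs from the number of column-odd ones. -/
open Finset

/-- A Latin `(i,m)`-rectangle. -/
def IsLatinRect {i m : ℕ} (A : Fin i → Fin m → Fin m) : Prop :=
  (∀ p, Function.Bijective (A p)) ∧ ∀ q, Function.Injective fun p => A p q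

/-- The column sign `ε_c(A)`. -/
def colSign {i m : ℕ} (A : Fin i → Fin m → Fin m) : ℤ :=
  ∏ q : Fin m, Int.sign (∏ p : Fin i, ∏ p' ∈ Finset.univ.filter (fun p' => p < p'),
    (((A p' q : ℕ) : ℤ) - ((A p q : ℕ) : ℤ)))

/-- The pattern of a rectangle: the tuple of underlying sets of its columns. -/
def patternOf {i m : ℕ} (A : Fin i → Fin m → Fin m) : Fin m → Finset (Fin m) :=
  fun q => Finset.image (fun p => A p q) Finset.univ

/-- A pattern of size `(i,m)`: an `m`-tuple of `i`-element subsets of `Fin m` such that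
each element of `Fin m` occurs in exactly `i` of the sets. -/
def IsPattern (i : ℕ) {m : ℕ} (P : Fin m → Finset (Fin m)) : Prop :=
  (∀ q, (P q).card = i) ∧ ∀ x : Fin m, (Finset.univ.filter fun q => x ∈ P q).card = i

/-- The number of column-even Latin rectangles with pattern `P`. -/
noncomputable def Lpos (i : ℕ) {m : ℕ} (P : Fin m → Finset (Fin m)) : ℕ :=
  Nat.card {A : Fin i → Fin m → Fin m // IsLatinRect A ∧ patternOf A = P ∧ colSign A = 1}

/-- The number of column-odd Latin rectangles with pattern `P`. -/
noncomputable def Lneg (i : ℕ) {m : ℕ} (P : Fin m → Finset (Fin m)) : ℕ :=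
  Nat.card {A : Fin i → Fin m → Fin m // IsLatinRect A ∧ patternOf A = P ∧ colSign A = -1}

/- ### Auxiliary material -/

theorem mysign_prod {α : Type*} (s : Finset α) (f : α → ℤ) :
    (∏ x ∈ s, f x).sign = ∏ x ∈ s, (f x).sign := by
  classical
  induction s using Finset.induction with
  | empty => simp
  | @insert a s' h ih => rw [Finset.prod_insert h, Finset.prod_insert h, Int.sign_mul, ih]

theorem mysign_unit {x : ℤ} (h : x ≠ 0) : x.sign = 1 ∨ x.sign = -1 := by
  rcases lt_trichotomy x 0 with h' | h' | h'
  · exact Or.inr (Int.sign_eq_neg_one_iff_neg.mpr h')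
  · exact absurd h' h
  · exact Or.inl (Int.sign_eq_one_iff_pos.mpr h')

/-- `colSign` of a rectangle with injective columns is `±1`. -/
theorem colSign_unit {i m : ℕ} {A : Fin i → Fin m → Fin m}
    (h : ∀ q, Function.Injective fun p => A p q) : colSign A = 1 ∨ colSign A = -1 := by
  have key : ∀ q : Fin m,
      (∏ p : Fin i, ∏ p' ∈ Finset.univ.filter (fun p' => p < p'),
        (((A p' q : ℕ) : ℤ) - ((A p q : ℕ) : ℤ))) ≠ 0 := by
    intro q
    rw [Finset.prod_ne_zero_iff]
    intro p _
    rw [Finset.prod_ne_zero_iff]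
    intro p' hp'
    have hlt : p < p' := (Finset.mem_filter.mp hp').2
    have hne : A p' q ≠ A p q := fun hc => absurd (h q hc) hlt.ne'
    intro hc
    apply hne
    have : ((A p' q : ℕ) : ℤ) = ((A p q : ℕ) : ℤ) := by linarith
    exact Fin.ext (Int.natCast_inj.mp this)
  have : colSign A * colSign A = 1 := by
    unfold colSign
    rw [← Finset.prod_mul_distrib]
    apply Finset.prod_eq_one
    intro q _
    rcases mysign_unit (key q) with h1 | h1 <;> rw [h1] <;> norm_num
  exact Int.eq_one_or_neg_one_of_mul_eq_one this

/-- Signed count of Latin rectangles with a given pattern. -/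
noncomputable def Ssum (i : ℕ) {m : ℕ} (P : Fin m → Finset (Fin m)) : ℤ :=
  ∑ A ∈ @Finset.filter _ (fun A : Fin i → Fin m → Fin m => IsLatinRect A ∧ patternOf A = P)
      (Classical.decPred _) Finset.univ, colSign A

theorem ssum_eq_sub (i : ℕ) {m : ℕ} (P : Fin m → Finset (Fin m)) :
    Ssum i P = (Lpos i P : ℤ) - (Lneg i P : ℤ) := by
  classical
  have hcount : ∀ c : ℤ,
      Nat.card {A : Fin i → Fin m → Fin m // IsLatinRect A ∧ patternOf A = P ∧ colSign A = c}
        = ((Finset.univ.filter (fun A : Fin i → Fin m → Fin m =>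
            IsLatinRect A ∧ patternOf A = P)).filter (fun A => colSign A = c)).card := by
    intro c
    rw [Nat.card_eq_fintype_card, Fintype.card_subtype, Finset.filter_filter]
    congr 1
    apply Finset.filter_congr
    intro A _
    tauto
  have hsplit := Finset.sum_filter_add_sum_filter_not
    (Finset.univ.filter (fun A : Fin i → Fin m → Fin m => IsLatinRect A ∧ patternOf A = P))
    (fun A => colSign A = 1) colSign
  have h1 : ∑ A ∈ (Finset.univ.filter (fun A : Fin i → Fin m → Fin m =>
      IsLatinRect A ∧ patternOf A = P)).filter (fun A => colSign A = 1), colSign A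
      = (Lpos i P : ℤ) := by
    rw [Finset.sum_congr rfl (fun A hA => (Finset.mem_filter.mp hA).2), Finset.sum_const]
    unfold Lpos
    rw [hcount 1]
    simp
  have h2 : ∑ A ∈ (Finset.univ.filter (fun A : Fin i → Fin m → Fin m =>
      IsLatinRect A ∧ patternOf A = P)).filter (fun A => ¬ colSign A = 1), colSign A
      = -(Lneg i P : ℤ) := by
    have heq : (Finset.univ.filter (fun A : Fin i → Fin m → Fin m =>
        IsLatinRect A ∧ patternOf A = P)).filter (fun A => ¬ colSign A = 1)
        = (Finset.univ.filter (fun A : Fin i → Fin m → Fin m =>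
        IsLatinRect A ∧ patternOf A = P)).filter (fun A => colSign A = -1) := by
      apply Finset.filter_congr
      intro A hA
      have hL := (Finset.mem_filter.mp hA).2.1
      rcases colSign_unit hL.2 with h | h <;> simp [h]
    rw [heq, Finset.sum_congr rfl (fun A hA => (Finset.mem_filter.mp hA).2), Finset.sum_const]
    unfold Lneg
    rw [hcount (-1)]
    simp
  have : Ssum i P = ∑ A ∈ Finset.univ.filter (fun A : Fin i → Fin m → Fin m =>
      IsLatinRect A ∧ patternOf A = P), colSign A := by
    unfold Ssum
    exact Finset.sum_congr (Finset.filter_congr_decidable _ _ _) (fun _ _ => rfl)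
  rw [this, ← hsplit, h1, h2]
  ring


def resRect {m j : ℕ} (A : Fin (j + 1) → Fin m → Fin m) : Fin j → Fin m → Fin m :=
  fun p q => A p.castSucc q

def extRect {m j : ℕ} (σ : Fin m → Fin m) (B : Fin j → Fin m → Fin m) :
    Fin (j + 1) → Fin m → Fin m :=
  fun p q => Fin.lastCases (σ q) (fun p' => B p' q) p

theorem res_ext {m j : ℕ} (σ : Fin m → Fin m) (B : Fin j → Fin m → Fin m) :
    resRect (extRect σ B) = B := by
  funext p q
  simp [resRect, extRect]

theorem colSign_ext {m j : ℕ} (σ : Fin m → Fin m) (B : Fin j → Fin m → Fin m) :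
    colSign (extRect σ B) =
      (∏ q : Fin m, ∏ p : Fin j, Int.sign (((σ q : ℕ) : ℤ) - ((B p q : ℕ) : ℤ))) * colSign B := by
  unfold colSign
  rw [← Finset.prod_mul_distrib]
  apply Finset.prod_congr rfl
  intro q _
  have hfil : ∀ p : Fin j, Finset.univ.filter (fun p' : Fin (j + 1) => p.castSucc < p')
      = insert (Fin.last j) ((Finset.univ.filter (fun p' : Fin j => p < p')).image Fin.castSucc) := by
    intro p
    ext p'
    simp only [Finset.mem_filter, Finset.mem_univ, true_and, Finset.mem_insert, Finset.mem_image]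
    constructor
    · intro hlt
      rcases Fin.eq_castSucc_or_eq_last p' with ⟨p'', rfl⟩ | rfl
      · exact Or.inr ⟨p'', ⟨Fin.castSucc_lt_castSucc_iff.mp hlt, rfl⟩⟩
      · exact Or.inl rfl
    · rintro (rfl | ⟨p'', hmem, rfl⟩)
      · exact Fin.castSucc_lt_last p
      · exact Fin.castSucc_lt_castSucc_iff.mpr hmem
  have hnm : ∀ p : Fin j, Fin.last j ∉
      ((Finset.univ.filter (fun p' : Fin j => p < p')).image Fin.castSucc) := by
    intro p hmem
    obtain ⟨x, _, hx⟩ := Finset.mem_image.mp hmem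
    exact (Fin.castSucc_lt_last x).ne hx
  have step : ∀ p : Fin j,
      (∏ p' ∈ Finset.univ.filter (fun p' : Fin (j + 1) => p.castSucc < p'),
        (((extRect σ B p' q : ℕ) : ℤ) - ((extRect σ B p.castSucc q : ℕ) : ℤ)))
      = (((σ q : ℕ) : ℤ) - ((B p q : ℕ) : ℤ)) *
          ∏ p' ∈ Finset.univ.filter (fun p' : Fin j => p < p'),
            (((B p' q : ℕ) : ℤ) - ((B p q : ℕ) : ℤ)) := by
    intro p
    rw [hfil p, Finset.prod_insert (hnm p),
      Finset.prod_image (fun a _ b _ h => Fin.castSucc_injective _ h)]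
    simp [extRect]
  have hsplit : (∏ p : Fin (j + 1), ∏ p' ∈ Finset.univ.filter (fun p' => p < p'),
        (((extRect σ B p' q : ℕ) : ℤ) - ((extRect σ B p q : ℕ) : ℤ)))
      = (∏ p : Fin j, ∏ p' ∈ Finset.univ.filter (fun p' => p < p'),
          (((B p' q : ℕ) : ℤ) - ((B p q : ℕ) : ℤ))) *
        ∏ p : Fin j, (((σ q : ℕ) : ℤ) - ((B p q : ℕ) : ℤ)) := by
    rw [Fin.prod_univ_castSucc]
    have hlast : Finset.univ.filter (fun p' : Fin (j + 1) => Fin.last j < p') = ∅ :=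
      Finset.filter_eq_empty_iff.mpr (fun p' _ => (Fin.le_last p').not_gt)
    rw [hlast, Finset.prod_empty, mul_one,
      Finset.prod_congr rfl (fun p _ => step p), Finset.prod_mul_distrib, mul_comm]
  rw [hsplit, Int.sign_mul, mul_comm]
  congr 1
  exact mysign_prod _ _

/-- The key descent step. -/
theorem ssum_descent {m j : ℕ} (P : Fin m → Finset (Fin m)) (hP : IsPattern (j + 1) P)
    (H : ∀ Q : Fin m → Finset (Fin m), IsPattern j Q → Ssum j Q = 0) :
    Ssum (j + 1) P = 0 := by
  classical
  have hssum : Ssum (j + 1) P = ∑ A ∈ Finset.univ.filter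
      (fun A : Fin (j + 1) → Fin m → Fin m => IsLatinRect A ∧ patternOf A = P), colSign A :=
    Finset.sum_congr (Finset.filter_congr_decidable _ _ _) (fun _ _ => rfl)
  rw [hssum, ← Finset.sum_fiberwise (Finset.univ.filter
      (fun A : Fin (j + 1) → Fin m → Fin m => IsLatinRect A ∧ patternOf A = P))
      (fun A => patternOf (resRect A)) colSign]
  apply Finset.sum_eq_zero
  intro Q _
  rcases Finset.eq_empty_or_nonempty ((Finset.univ.filter
      (fun A : Fin (j + 1) → Fin m → Fin m => IsLatinRect A ∧ patternOf A = P)).filter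
      (fun A => patternOf (resRect A) = Q)) with he | ⟨A₀, hA₀⟩
  · rw [he, Finset.sum_empty]
  · simp only [Finset.mem_filter, Finset.mem_univ, true_and] at hA₀
    obtain ⟨⟨hA₀L, hA₀P⟩, hA₀Q⟩ := hA₀
    set σ : Fin m → Fin m := fun q => A₀ (Fin.last j) q with hσdef
    have hσbij : Function.Bijective σ := hA₀L.1 (Fin.last j)
    have hQsub : ∀ q, Q q ⊆ P q := by
      intro q x hx
      rw [← hA₀Q] at hx
      obtain ⟨p, -, rfl⟩ := Finset.mem_image.mp hx
      rw [← hA₀P]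
      exact Finset.mem_image.mpr ⟨p.castSucc, Finset.mem_univ _, rfl⟩
    have hQcard : ∀ q, (Q q).card = j := by
      intro q
      rw [← hA₀Q]
      unfold patternOf resRect
      rw [Finset.card_image_of_injective _
        (fun a b hab => Fin.castSucc_injective _ (hA₀L.2 q hab))]
      simp
    have hPcard : ∀ q, (P q).card = j + 1 := hP.1
    have hσmemP : ∀ q, σ q ∈ P q := by
      intro q
      rw [← hA₀P]
      exact Finset.mem_image.mpr ⟨Fin.last j, Finset.mem_univ _, rfl⟩
    have hσnotQ : ∀ q, σ q ∉ Q q := by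
      intro q hmem
      rw [← hA₀Q] at hmem
      obtain ⟨p, -, hp⟩ := Finset.mem_image.mp hmem
      exact (Fin.castSucc_lt_last p).ne (hA₀L.2 q hp)
    have hQPins : ∀ q, P q = insert (σ q) (Q q) := by
      intro q
      refine (Finset.eq_of_subset_of_card_le ?_ ?_).symm
      · intro x hx
        rcases Finset.mem_insert.mp hx with rfl | hx
        · exact hσmemP q
        · exact hQsub q hx
      · rw [Finset.card_insert_of_notMem (hσnotQ q), hQcard, hPcard]
    have hQpat : IsPattern j Q := by
      refine ⟨hQcard, ?_⟩
      intro x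
      obtain ⟨q₀, hq₀⟩ := hσbij.surjective x
      have hsplit := Finset.card_filter_add_card_filter_not
        (s := Finset.univ.filter (fun q => x ∈ P q)) (fun q => x = σ q)
      have h1 : (Finset.univ.filter (fun q => x ∈ P q)).filter (fun q => x = σ q) = {q₀} := by
        ext q
        simp only [Finset.mem_filter, Finset.mem_univ, true_and, Finset.mem_singleton]
        constructor
        · rintro ⟨-, hxs⟩
          exact (hσbij.injective (hq₀.trans hxs)).symm
        · rintro rfl
          exact ⟨hq₀ ▸ hσmemP _, hq₀.symm⟩
      have h2 : (Finset.univ.filter (fun q => x ∈ P q)).filter (fun q => ¬ x = σ q)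
          = Finset.univ.filter (fun q => x ∈ Q q) := by
        ext q
        simp only [Finset.mem_filter, Finset.mem_univ, true_and]
        constructor
        · rintro ⟨hxP, hne⟩
          rw [hQPins q] at hxP
          rcases Finset.mem_insert.mp hxP with rfl | hx
          · exact absurd rfl hne
          · exact hx
        · intro hxQ
          exact ⟨hQsub q hxQ, fun he => hσnotQ q (he ▸ hxQ)⟩
      rw [h1, h2, hP.2 x, Finset.card_singleton] at hsplit
      omega
    have hlastA : ∀ A, A ∈ (Finset.univ.filter
        (fun A : Fin (j + 1) → Fin m → Fin m => IsLatinRect A ∧ patternOf A = P)).filter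
        (fun A => patternOf (resRect A) = Q) → ∀ q, A (Fin.last j) q = σ q := by
      intro A hA q
      simp only [Finset.mem_filter, Finset.mem_univ, true_and] at hA
      obtain ⟨⟨hAL, hAP⟩, hAQ⟩ := hA
      have hc : (P q \ Q q).card = 1 := by
        rw [Finset.card_sdiff_of_subset (hQsub q), hQcard, hPcard]
        omega
      have hm1 : A (Fin.last j) q ∈ P q \ Q q := by
        rw [Finset.mem_sdiff]
        constructor
        · rw [← hAP]
          exact Finset.mem_image.mpr ⟨Fin.last j, Finset.mem_univ _, rfl⟩
        · intro hmem
          rw [← hAQ] at hmem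
          obtain ⟨p, -, hp⟩ := Finset.mem_image.mp hmem
          exact (Fin.castSucc_lt_last p).ne (hAL.2 q hp)
      have hm2 : σ q ∈ P q \ Q q := Finset.mem_sdiff.mpr ⟨hσmemP q, hσnotQ q⟩
      exact Finset.card_le_one.mp hc.le _ hm1 _ hm2
    have hfwd : ∀ A ∈ (Finset.univ.filter
        (fun A : Fin (j + 1) → Fin m → Fin m => IsLatinRect A ∧ patternOf A = P)).filter
        (fun A => patternOf (resRect A) = Q),
        resRect A ∈ Finset.univ.filter
          (fun B : Fin j → Fin m → Fin m => IsLatinRect B ∧ patternOf B = Q) := by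
      intro A hA
      simp only [Finset.mem_filter, Finset.mem_univ, true_and] at hA ⊢
      obtain ⟨⟨hAL, hAP⟩, hAQ⟩ := hA
      exact ⟨⟨fun p => hAL.1 p.castSucc,
        fun q a b hab => Fin.castSucc_injective _ (hAL.2 q hab)⟩, hAQ⟩
    have hleft : ∀ A ∈ (Finset.univ.filter
        (fun A : Fin (j + 1) → Fin m → Fin m => IsLatinRect A ∧ patternOf A = P)).filter
        (fun A => patternOf (resRect A) = Q), extRect σ (resRect A) = A := by
      intro A hA
      funext p q
      rcases Fin.eq_castSucc_or_eq_last p with ⟨p', rfl⟩ | rfl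
      · simp [extRect, resRect]
      · simp only [extRect, Fin.lastCases_last]
        exact (hlastA A hA q).symm
    have hbwd : ∀ B ∈ Finset.univ.filter
        (fun B : Fin j → Fin m → Fin m => IsLatinRect B ∧ patternOf B = Q),
        extRect σ B ∈ (Finset.univ.filter
          (fun A : Fin (j + 1) → Fin m → Fin m => IsLatinRect A ∧ patternOf A = P)).filter
          (fun A => patternOf (resRect A) = Q) := by
      intro B hB
      simp only [Finset.mem_filter, Finset.mem_univ, true_and] at hB ⊢
      obtain ⟨hBL, hBQ⟩ := hB
      have hBmem : ∀ q (p' : Fin j), B p' q ∈ Q q := by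
        intro q p'
        rw [← hBQ]
        exact Finset.mem_image.mpr ⟨p', Finset.mem_univ _, rfl⟩
      have hcast : ∀ (p : Fin j) q, extRect σ B p.castSucc q = B p q := by
        intro p q; simp [extRect]
      have hlast : ∀ q, extRect σ B (Fin.last j) q = σ q := by
        intro q; simp [extRect]
      have hcol : ∀ q, Function.Injective fun p => extRect σ B p q := by
        intro q a b hab
        have hab' : extRect σ B a q = extRect σ B b q := hab
        rcases Fin.eq_castSucc_or_eq_last a with ⟨a', rfl⟩ | rfl <;>
          rcases Fin.eq_castSucc_or_eq_last b with ⟨b', rfl⟩ | rfl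
        · rw [hcast, hcast] at hab'
          exact congrArg Fin.castSucc (hBL.2 q hab')
        · rw [hcast, hlast] at hab'
          exfalso; apply hσnotQ q; rw [← hab']; exact hBmem q a'
        · rw [hlast, hcast] at hab'
          exfalso; apply hσnotQ q; rw [hab']; exact hBmem q b'
        · rfl
      have hrows : ∀ p, Function.Bijective (extRect σ B p) := by
        intro p
        rcases Fin.eq_castSucc_or_eq_last p with ⟨p', rfl⟩ | rfl
        · have he : extRect σ B p'.castSucc = B p' := funext (hcast p')
          rw [he]; exact hBL.1 p'
        · have he : extRect σ B (Fin.last j) = σ := funext hlast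
          rw [he]; exact hσbij
      have hpat : patternOf (extRect σ B) = P := by
        funext q
        rw [hQPins q]
        ext x
        simp only [patternOf, Finset.mem_image, Finset.mem_univ, true_and, Finset.mem_insert]
        constructor
        · rintro ⟨p, rfl⟩
          rcases Fin.eq_castSucc_or_eq_last p with ⟨p', rfl⟩ | rfl
          · rw [hcast]; exact Or.inr (hBmem q p')
          · rw [hlast]; exact Or.inl rfl
        · rintro (rfl | hx)
          · exact ⟨Fin.last j, hlast q⟩
          · rw [← hBQ] at hx
            obtain ⟨p', -, rfl⟩ := Finset.mem_image.mp hx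
            exact ⟨p'.castSucc, hcast p' q⟩
      refine ⟨⟨⟨hrows, hcol⟩, hpat⟩, ?_⟩
      rw [res_ext]
      exact hBQ
    have hval : ∀ A ∈ (Finset.univ.filter
        (fun A : Fin (j + 1) → Fin m → Fin m => IsLatinRect A ∧ patternOf A = P)).filter
        (fun A => patternOf (resRect A) = Q),
        colSign A = (∏ q : Fin m, ∏ y ∈ Q q, Int.sign (((σ q : ℕ) : ℤ) - ((y : ℕ) : ℤ)))
          * colSign (resRect A) := by
      intro A hA
      have hAQ : patternOf (resRect A) = Q := (Finset.mem_filter.mp hA).2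
      conv_lhs => rw [← hleft A hA]
      rw [colSign_ext]
      congr 1
      apply Finset.prod_congr rfl
      intro q _
      rw [← congrFun hAQ q]
      unfold patternOf
      have hm := (Finset.mem_filter.mp (hfwd A hA)).2.1
      rw [Finset.prod_image (fun a _ b _ hab => hm.2 q hab)]
    rw [Finset.sum_nbij'
      (g := fun B : Fin j → Fin m → Fin m =>
        (∏ q : Fin m, ∏ y ∈ Q q, Int.sign (((σ q : ℕ) : ℤ) - ((y : ℕ) : ℤ))) * colSign B)
      (fun A => resRect A) (fun B => extRect σ B) hfwd hbwd hleft
      (fun B hB => res_ext σ B) hval]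
    rw [← Finset.mul_sum]
    have hz : ∑ B ∈ Finset.univ.filter
        (fun B : Fin j → Fin m → Fin m => IsLatinRect B ∧ patternOf B = Q), colSign B = 0 := by
      rw [← H Q hQpat]
      exact Finset.sum_congr (Finset.filter_congr_decidable _ _ _).symm (fun _ _ => rfl)
    rw [hz, mul_zero]

/-- If for some `(i,m)`-pattern the numbers of column-even and column-odd Latin rectangles
differ, then the same holds for some `(i',m)`-pattern for every `1 ≤ i' ≤ i`. -/
theorem exists_pattern_of_smaller_height {i m : ℕ} (hi1 : 1 ≤ i) (him : i ≤ m)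
    (h : ∃ P : Fin m → Finset (Fin m), IsPattern i P ∧ Lpos i P ≠ Lneg i P) :
    ∀ i' : ℕ, 1 ≤ i' → i' ≤ i →
      ∃ P' : Fin m → Finset (Fin m), IsPattern i' P' ∧ Lpos i' P' ≠ Lneg i' P' := by
  intro i' hi'1 hi'i
  by_contra hcon
  push_neg at hcon
  obtain ⟨P, hPpat, hPne⟩ := h
  have key : ∀ j, i' ≤ j → j ≤ i → ∀ Q : Fin m → Finset (Fin m), IsPattern j Q → Ssum j Q = 0 := by
    intro j hj
    induction j, hj using Nat.le_induction with
    | base =>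
      intro _ Q hQ
      rw [ssum_eq_sub, hcon Q hQ, sub_self]
    | succ j hj ih =>
      intro hji Q hQ
      exact ssum_descent Q hQ (ih (Nat.le_of_succ_le hji))
  have h0 := key i hi'i le_rfl P hPpat
  rw [ssum_eq_sub] at h0
  exact hPne (by omega)
end

section
/- Let m be a positive even integer and suppose the Alon–Tarsi/Huang–Rota column Latin square property holds for m (i.e., #CELS(m) ≠ #COLS(m)). Then for every 1 ≤ i ≤ m there exists a pattern 𝒜 of size (i,m) with #L^+_𝒜 ≠ #L^-_𝒜, and consequently the sum ∑_{𝒜 ∈ S(i,m)} (#L^+_𝒜 − #L^-_𝒜)^2 is strictly positive. -/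
open Finset

/-- The number of column-even Latin `(m,m)`-squares. -/
noncomputable def CELS (m : ℕ) : ℕ :=
  Nat.card {A : Fin m → Fin m → Fin m // IsLatinRect A ∧ colSign A = 1}

/-- The number of column-odd Latin `(m,m)`-squares. -/
noncomputable def COLS (m : ℕ) : ℕ :=
  Nat.card {A : Fin m → Fin m → Fin m // IsLatinRect A ∧ colSign A = -1}

/-- `Int.sign` as a monoid hom. -/
def signHom' : ℤ →* ℤ := { toFun := Int.sign, map_one' := rfl, map_mul' := Int.sign_mul }

lemma sign_prod {α : Type*} (s : Finset α) (f : α → ℤ) :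
    Int.sign (∏ x ∈ s, f x) = ∏ x ∈ s, Int.sign (f x) :=
  map_prod signHom' f s

open scoped Classical in
lemma colSign_eq {i m : ℕ} (A : Fin i → Fin m → Fin m) :
    colSign A = ∏ q : Fin m, ∏ p : Fin i, ∏ p' ∈ Finset.univ.filter (fun p' => p < p'),
      Int.sign ((((A p' q : ℕ) : ℤ) - ((A p q : ℕ) : ℤ))) := by
  unfold colSign
  refine Finset.prod_congr rfl fun q _ => ?_
  rw [sign_prod]
  exact Finset.prod_congr rfl fun p _ => sign_prod _ _

/-- Splitting the strictly-increasing-pairs product over `Fin (n+1)`. -/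
lemma pairs_prod_split {M : Type*} [CommMonoid M] {n : ℕ} (f : Fin (n+1) → Fin (n+1) → M) :
    (∏ p : Fin (n+1), ∏ p' ∈ Finset.univ.filter (fun p' => p < p'), f p p')
      = (∏ p : Fin n, ∏ p' ∈ Finset.univ.filter (fun p' => p < p'), f p.castSucc p'.castSucc)
        * ∏ p : Fin n, f p.castSucc (Fin.last n) := by
  classical
  rw [Fin.prod_univ_castSucc (fun p => ∏ p' ∈ Finset.univ.filter (fun p' => p < p'), f p p')]
  have hlast : (Finset.univ.filter (fun p' => Fin.last n < p')) = ∅ := by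
    ext p'; simp [Fin.le_last p' |>.not_gt]
  rw [hlast, Finset.prod_empty, mul_one]
  rw [← Finset.prod_mul_distrib]
  refine Finset.prod_congr rfl fun p _ => ?_
  rw [Finset.prod_filter, Finset.prod_filter,
    Fin.prod_univ_castSucc (fun p' => if p.castSucc < p' then f p.castSucc p' else 1)]
  simp [Fin.castSucc_lt_castSucc_iff, Fin.castSucc_lt_last]

-- card of pattern column
lemma card_patternOf {i m : ℕ} {A : Fin i → Fin m → Fin m} (hA : IsLatinRect A) (q : Fin m) :
    (patternOf A q).card = i := by
  rw [patternOf, Finset.card_image_of_injective _ (hA.2 q), Finset.card_univ, Fintype.card_fin]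

open scoped Classical in
lemma patternOf_isPattern {i m : ℕ} {A : Fin i → Fin m → Fin m} (hA : IsLatinRect A) :
    IsPattern i (patternOf A) := by
  refine ⟨card_patternOf hA, fun x => ?_⟩
  set g : Fin i → Fin m := fun p => ((hA.1 p).2 x).choose with hg
  have hgs : ∀ p, A p (g p) = x := fun p => ((hA.1 p).2 x).choose_spec
  have : (Finset.univ.filter fun q => x ∈ patternOf A q) = Finset.image g Finset.univ := by
    ext q
    simp only [mem_filter, mem_univ, true_and, mem_image, patternOf, Finset.mem_image]
    constructor
    · rintro ⟨p, hp⟩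
      exact ⟨p, (hA.1 p).1 (by rw [hgs p, hp])⟩
    · rintro ⟨p, rfl⟩
      exact ⟨p, hgs p⟩
  rw [this, Finset.card_image_of_injective, Finset.card_univ, Fintype.card_fin]
  intro p p' hpp'
  exact hA.2 (g p') (show A p (g p') = A p' (g p') by rw [← hpp', hgs p, hpp', hgs p'])

open scoped Classical in
/-- The signed count `#L⁺ - #L⁻` as a sum of column signs. -/
noncomputable def Dsgn (i : ℕ) {m : ℕ} (P : Fin m → Finset (Fin m)) : ℤ :=
  ∑ A ∈ Finset.univ.filter
      (fun A : Fin i → Fin m → Fin m => IsLatinRect A ∧ patternOf A = P), colSign A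

lemma colSign_units {i m : ℕ} {A : Fin i → Fin m → Fin m} (hA : IsLatinRect A) :
    colSign A = 1 ∨ colSign A = -1 := by
  have h1 : ∀ q : Fin m, (∏ p : Fin i, ∏ p' ∈ Finset.univ.filter (fun p' => p < p'),
      (((A p' q : ℕ) : ℤ) - ((A p q : ℕ) : ℤ))) ≠ 0 := by
    intro q
    refine Finset.prod_ne_zero_iff.2 fun p _ => Finset.prod_ne_zero_iff.2 fun p' hp' => ?_
    have hne : A p' q ≠ A p q := fun hc => by
      have := hA.2 q hc
      simp only [mem_filter, mem_univ, true_and] at hp'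
      exact absurd this (ne_of_gt hp')
    intro hc
    apply hne
    have : ((A p' q : ℕ) : ℤ) = ((A p q : ℕ) : ℤ) := by linarith
    exact Fin.ext (by exact_mod_cast this)
  unfold colSign
  have hu : IsUnit (∏ q : Fin m, Int.sign (∏ p : Fin i, ∏ p' ∈ Finset.univ.filter (fun p' => p < p'),
      (((A p' q : ℕ) : ℤ) - ((A p q : ℕ) : ℤ)))) :=
    Finset.prod_induction _ IsUnit (fun a b => IsUnit.mul) isUnit_one
      (fun q _ => by
        rcases lt_or_gt_of_ne (h1 q) with hq | hq
        · simp [Int.sign_eq_neg_one_of_neg hq]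
        · simp [Int.sign_eq_one_of_pos hq])
  rcases Int.isUnit_iff.1 hu with h | h
  · exact Or.inl h
  · exact Or.inr h

open scoped Classical in
lemma lpos_sub_lneg {i m : ℕ} (P : Fin m → Finset (Fin m)) :
    (Lpos i P : ℤ) - (Lneg i P : ℤ) = Dsgn i P := by
  have hpos : Lpos i P = (Finset.univ.filter
      (fun A : Fin i → Fin m → Fin m => (IsLatinRect A ∧ patternOf A = P) ∧ colSign A = 1)).card := by
    rw [Lpos, Nat.card_eq_fintype_card]
    rw [Fintype.card_subtype]
    congr 1; ext A; simp [and_assoc]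
  have hneg : Lneg i P = (Finset.univ.filter
      (fun A : Fin i → Fin m → Fin m => (IsLatinRect A ∧ patternOf A = P) ∧ colSign A = -1)).card := by
    rw [Lneg, Nat.card_eq_fintype_card]
    rw [Fintype.card_subtype]
    congr 1; ext A; simp [and_assoc]
  rw [Dsgn, ← Finset.sum_filter_add_sum_filter_not _ (fun A => colSign A = 1),
    Finset.filter_filter, Finset.filter_filter]
  have e1 : ∑ A ∈ Finset.univ.filter
      (fun A : Fin i → Fin m → Fin m => (IsLatinRect A ∧ patternOf A = P) ∧ colSign A = 1),
      colSign A = (Lpos i P : ℤ) := by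
    rw [hpos, Finset.sum_congr rfl (fun A hA => (Finset.mem_filter.1 hA).2.2)]
    simp
  have e2 : ∑ A ∈ Finset.univ.filter
      (fun A : Fin i → Fin m → Fin m => (IsLatinRect A ∧ patternOf A = P) ∧ ¬colSign A = 1),
      colSign A = -(Lneg i P : ℤ) := by
    have hset : Finset.univ.filter
        (fun A : Fin i → Fin m → Fin m => (IsLatinRect A ∧ patternOf A = P) ∧ ¬colSign A = 1)
        = Finset.univ.filter
        (fun A : Fin i → Fin m → Fin m => (IsLatinRect A ∧ patternOf A = P) ∧ colSign A = -1) := by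
      ext A
      simp only [mem_filter, mem_univ, true_and, and_congr_right_iff]
      intro hA
      constructor
      · intro hne; rcases colSign_units hA.1 with h | h
        · exact absurd h hne
        · exact h
      · intro h; rw [h]; decide
    rw [hset, hneg, Finset.sum_congr rfl (fun A hA => (Finset.mem_filter.1 hA).2.2)]
    simp
  rw [e1, e2]
  ring

open scoped Classical in
lemma colSign_snoc {i m : ℕ} (B : Fin i → Fin m → Fin m) (r : Fin m → Fin m) :
    colSign (Fin.snoc B r) = colSign B *
      ∏ q : Fin m, ∏ p : Fin i, Int.sign (((r q : ℕ) : ℤ) - ((B p q : ℕ) : ℤ)) := by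
  rw [colSign_eq, colSign_eq, ← Finset.prod_mul_distrib]
  refine Finset.prod_congr rfl fun q _ => ?_
  rw [pairs_prod_split (fun p p' => Int.sign
      ((((Fin.snoc B r : Fin (i+1) → Fin m → Fin m) p' q : ℕ) : ℤ)
        - (((Fin.snoc B r : Fin (i+1) → Fin m → Fin m) p q : ℕ) : ℤ)))]
  congr 1
  · refine Finset.prod_congr rfl fun p _ => Finset.prod_congr rfl fun p' _ => ?_
    rw [Fin.snoc_castSucc, Fin.snoc_castSucc]
  · refine Finset.prod_congr rfl fun p _ => ?_
    rw [Fin.snoc_castSucc, Fin.snoc_last]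

/-- The forced extension row determined by patterns `P ⊇ Q`. -/
noncomputable def extRow {m : ℕ} (P Q : Fin m → Finset (Fin m)) (q : Fin m) : Fin m :=
  if h : (P q \ Q q).Nonempty then h.choose else q

lemma extRow_mem {m : ℕ} {P Q : Fin m → Finset (Fin m)} {q : Fin m}
    (h : (P q \ Q q).Nonempty) : extRow P Q q ∈ P q \ Q q := by
  rw [extRow, dif_pos h]; exact h.choose_spec

lemma extRow_eq_of_mem {m : ℕ} {P Q : Fin m → Finset (Fin m)} {q : Fin m} {x : Fin m}
    (hcard : (P q \ Q q).card = 1) (hx : x ∈ P q \ Q q) : extRow P Q q = x := by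
  obtain ⟨a, ha⟩ := Finset.card_eq_one.1 hcard
  have h1 : extRow P Q q ∈ P q \ Q q := extRow_mem ⟨x, hx⟩
  rw [ha, Finset.mem_singleton] at h1 hx
  rw [h1, hx]

/-- The sign factor contributed by the forced extension row. -/
noncomputable def eFac {m : ℕ} (P Q : Fin m → Finset (Fin m)) : ℤ :=
  ∏ q : Fin m, ∏ x ∈ Q q, Int.sign (((extRow P Q q : ℕ) : ℤ) - ((x : ℕ) : ℤ))

open scoped Classical in
lemma Dsgn_succ_eq_zero {i m : ℕ} (P : Fin m → Finset (Fin m)) (hP : IsPattern (i+1) P)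
    (h0 : ∀ Q : Fin m → Finset (Fin m), IsPattern i Q → Dsgn i Q = 0) :
    Dsgn (i + 1) P = 0 := by
  set S : Finset (Fin i → Fin m → Fin m) :=
    Finset.univ.filter (fun B => IsLatinRect B ∧ ∀ q, patternOf B q ⊆ P q) with hS
  -- basic facts about members of S
  have hcard1 : ∀ B ∈ S, ∀ q, (P q \ patternOf B q).card = 1 := by
    intro B hB q
    rw [hS, mem_filter] at hB
    rw [Finset.card_sdiff_of_subset (hB.2.2 q), card_patternOf hB.2.1, hP.1 q]
    omega
  have hrmem : ∀ B ∈ S, ∀ q, extRow P (patternOf B) q ∈ P q \ patternOf B q := by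
    intro B hB q
    exact extRow_mem (Finset.card_pos.1 (by rw [hcard1 B hB q]; norm_num))
  -- the extension row is a bijection
  have hrbij : ∀ B ∈ S, Function.Bijective (extRow P (patternOf B)) := by
    intro B hB
    rw [Function.bijective_iff_existsUnique]
    intro x
    have hQpat : IsPattern i (patternOf B) := patternOf_isPattern (mem_filter.1 hB).2.1
    have hsub : ∀ q, patternOf B q ⊆ P q := (mem_filter.1 hB).2.2
    have hset : Finset.univ.filter (fun q => extRow P (patternOf B) q = x)
        = Finset.univ.filter (fun q => x ∈ P q) \ Finset.univ.filter (fun q => x ∈ patternOf B q) := by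
      ext q
      simp only [mem_filter, mem_univ, true_and, Finset.mem_sdiff]
      constructor
      · rintro rfl
        have := hrmem B hB q
        rw [Finset.mem_sdiff] at this
        exact this
      · rintro hx
        exact extRow_eq_of_mem (hcard1 B hB q) (Finset.mem_sdiff.2 hx)
    have hsub2 : Finset.univ.filter (fun q => x ∈ patternOf B q)
        ⊆ Finset.univ.filter (fun q => x ∈ P q) := by
      intro q hq
      rw [mem_filter] at hq ⊢
      exact ⟨hq.1, hsub q hq.2⟩
    have hcard : (Finset.univ.filter (fun q => extRow P (patternOf B) q = x)).card = 1 := by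
      rw [hset, Finset.card_sdiff_of_subset hsub2, hP.2 x, hQpat.2 x]
      omega
    obtain ⟨q, hq⟩ := Finset.card_eq_one.1 hcard
    refine ⟨q, ?_, fun q' hq' => ?_⟩
    · have : q ∈ Finset.univ.filter (fun q => extRow P (patternOf B) q = x) := by
        rw [hq]; exact Finset.mem_singleton_self q
      exact (mem_filter.1 this).2
    · have : q' ∈ Finset.univ.filter (fun q => extRow P (patternOf B) q = x) := by
        rw [mem_filter]; exact ⟨mem_univ _, hq'⟩
      rw [hq, Finset.mem_singleton] at this
      exact this
  -- the extension is a Latin rectangle with pattern P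
  have hsnocLatin : ∀ B ∈ S, IsLatinRect (Fin.snoc B (extRow P (patternOf B))) := by
    intro B hB
    have hBL : IsLatinRect B := (mem_filter.1 hB).2.1
    constructor
    · intro p
      refine Fin.lastCases ?_ ?_ p
      · rw [Fin.snoc_last]; exact hrbij B hB
      · intro p0; rw [Fin.snoc_castSucc]; exact hBL.1 p0
    · intro q
      have hgen : ∀ p p' : Fin (i + 1),
          (Fin.snoc B (extRow P (patternOf B)) : Fin (i+1) → Fin m → Fin m) p q
            = (Fin.snoc B (extRow P (patternOf B)) : Fin (i+1) → Fin m → Fin m) p' q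
          → p = p' := by
        intro p p'
        refine Fin.lastCases ?_ ?_ p
        · refine Fin.lastCases ?_ ?_ p'
          · intro _; rfl
          · intro p1 hE
            exfalso
            rw [Fin.snoc_last, Fin.snoc_castSucc] at hE
            have hmm := hrmem B hB q
            rw [Finset.mem_sdiff] at hmm
            exact hmm.2 (by rw [hE]; exact Finset.mem_image_of_mem _ (mem_univ p1))
        · intro p0
          refine Fin.lastCases ?_ ?_ p'
          · intro hE
            exfalso
            rw [Fin.snoc_last, Fin.snoc_castSucc] at hE
            have hmm := hrmem B hB q
            rw [Finset.mem_sdiff] at hmm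
            exact hmm.2 (by rw [← hE]; exact Finset.mem_image_of_mem _ (mem_univ p0))
          · intro p1 hE
            rw [Fin.snoc_castSucc, Fin.snoc_castSucc] at hE
            exact congrArg Fin.castSucc (hBL.2 q hE)
      intro p p' h
      exact hgen p p' h
  have hsnocPat : ∀ B ∈ S, patternOf (Fin.snoc B (extRow P (patternOf B))) = P := by
    intro B hB
    have hBL : IsLatinRect B := (mem_filter.1 hB).2.1
    funext q
    have himg : patternOf (Fin.snoc B (extRow P (patternOf B))) q
        = insert (extRow P (patternOf B) q) (patternOf B q) := by
      ext x
      simp only [patternOf, Finset.mem_image, Finset.mem_insert, mem_univ, true_and]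
      constructor
      · rintro ⟨p, rfl⟩
        refine Fin.lastCases ?_ ?_ p
        · left; rw [Fin.snoc_last]
        · intro p0; right; rw [Fin.snoc_castSucc]; exact ⟨p0, rfl⟩
      · rintro (rfl | ⟨p0, rfl⟩)
        · exact ⟨Fin.last i, by rw [Fin.snoc_last]⟩
        · exact ⟨p0.castSucc, by rw [Fin.snoc_castSucc]⟩
    have hrm := hrmem B hB q
    rw [Finset.mem_sdiff] at hrm
    rw [himg]
    apply Finset.eq_of_subset_of_card_le
    · exact Finset.insert_subset hrm.1 ((mem_filter.1 hB).2.2 q)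
    · rw [hP.1 q, Finset.card_insert_of_notMem hrm.2, card_patternOf hBL]
  -- sign of the extension
  have hsnocSign : ∀ B ∈ S, colSign (Fin.snoc B (extRow P (patternOf B)))
      = colSign B * eFac P (patternOf B) := by
    intro B hB
    have hBL : IsLatinRect B := (mem_filter.1 hB).2.1
    rw [colSign_snoc, eFac]
    congr 1
    refine Finset.prod_congr rfl fun q _ => ?_
    rw [patternOf, Finset.prod_image (fun p _ p' _ h => hBL.2 q h)]
  -- truncation facts
  have hinitS : ∀ A : Fin (i + 1) → Fin m → Fin m, IsLatinRect A → patternOf A = P →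
      Fin.init A ∈ S ∧
        Fin.snoc (Fin.init A) (extRow P (patternOf (Fin.init A))) = A := by
    intro A hAL hApat
    have hBL' : IsLatinRect (Fin.init A) :=
      ⟨fun p => hAL.1 _, fun q' p p' h => Fin.castSucc_injective i (hAL.2 q' h)⟩
    have hsub : ∀ q, patternOf (Fin.init A) q ⊆ P q := by
      intro q x hx
      rw [patternOf, Finset.mem_image] at hx
      obtain ⟨p, -, rfl⟩ := hx
      simp only [← hApat, patternOf, Finset.mem_image, mem_univ, true_and]
      exact ⟨p.castSucc, rfl⟩
    have hmemS : Fin.init A ∈ S := by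
      rw [hS, mem_filter]; exact ⟨mem_univ _, hBL', hsub⟩
    refine ⟨hmemS, ?_⟩
    have hrow : extRow P (patternOf (Fin.init A)) = A (Fin.last i) := by
      funext q
      have hcard : (P q \ patternOf (Fin.init A) q).card = 1 := by
        rw [Finset.card_sdiff_of_subset (hsub q), hP.1 q, card_patternOf hBL']
        omega
      refine extRow_eq_of_mem hcard (Finset.mem_sdiff.2 ⟨?_, ?_⟩)
      · simp only [← hApat, patternOf, Finset.mem_image, mem_univ, true_and]
        exact ⟨Fin.last i, rfl⟩
      · intro hc
        rw [patternOf, Finset.mem_image] at hc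
        obtain ⟨p, -, hp⟩ := hc
        have : p.castSucc = Fin.last i := hAL.2 q hp
        exact absurd this (Fin.castSucc_lt_last p).ne
    rw [hrow, Fin.snoc_init_self]
  -- transfer the sum via the truncation bijection
  have hsum : Dsgn (i + 1) P = ∑ B ∈ S, colSign B * eFac P (patternOf B) := by
    rw [Dsgn]
    refine Finset.sum_bij' (fun A _ => Fin.init A)
      (fun B _ => Fin.snoc B (extRow P (patternOf B))) ?_ ?_ ?_ ?_ ?_
    · intro A hA
      rw [mem_filter] at hA
      exact (hinitS A hA.2.1 hA.2.2).1
    · intro B hB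
      rw [mem_filter]
      exact ⟨mem_univ _, hsnocLatin B hB, hsnocPat B hB⟩
    · intro A hA
      rw [mem_filter] at hA
      exact (hinitS A hA.2.1 hA.2.2).2
    · intro B hB
      exact Fin.init_snoc _ _
    · intro A hA
      rw [mem_filter] at hA
      obtain ⟨-, hAL, hApat⟩ := hA
      obtain ⟨hmem, heq⟩ := hinitS A hAL hApat
      calc colSign A = colSign (Fin.snoc (Fin.init A) (extRow P (patternOf (Fin.init A)))) := by
            rw [heq]
        _ = colSign (Fin.init A) * eFac P (patternOf (Fin.init A)) := hsnocSign _ hmem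
  -- group by the pattern of the truncation
  rw [hsum, ← Finset.sum_fiberwise_of_maps_to
    (fun B hB => Finset.mem_image_of_mem patternOf hB : ∀ B ∈ S, patternOf B ∈ S.image patternOf)]
  refine Finset.sum_eq_zero fun Q hQ => ?_
  obtain ⟨B0, hB0, rfl⟩ := Finset.mem_image.1 hQ
  have hQpat : IsPattern i (patternOf B0) := patternOf_isPattern (mem_filter.1 hB0).2.1
  have hfil : S.filter (fun B => patternOf B = patternOf B0)
      = Finset.univ.filter (fun B : Fin i → Fin m → Fin m =>
          IsLatinRect B ∧ patternOf B = patternOf B0) := by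
    ext B
    rw [hS]
    simp only [Finset.filter_filter, mem_filter, mem_univ, true_and]
    constructor
    · rintro ⟨⟨hL, -⟩, hpat⟩; exact ⟨hL, hpat⟩
    · rintro ⟨hL, hpat⟩
      exact ⟨⟨hL, by rw [hpat]; exact (mem_filter.1 hB0).2.2⟩, hpat⟩
  have : ∑ B ∈ S.filter (fun B => patternOf B = patternOf B0), colSign B * eFac P (patternOf B)
      = eFac P (patternOf B0) * Dsgn i (patternOf B0) := by
    rw [Dsgn, Finset.mul_sum, ← hfil]
    refine Finset.sum_congr rfl fun B hB => ?_
    rw [(mem_filter.1 hB).2]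
    ring
  rw [this, h0 _ hQpat, mul_zero]

lemma patternOf_univ {m : ℕ} {A : Fin m → Fin m → Fin m} (hA : IsLatinRect A) :
    patternOf A = fun _ => (Finset.univ : Finset (Fin m)) := by
  funext q
  apply Finset.eq_univ_of_card
  rw [card_patternOf hA, Fintype.card_fin]

lemma isPattern_univ (m : ℕ) : IsPattern m (fun _ => (Finset.univ : Finset (Fin m))) :=
  ⟨fun _ => by simp, fun _ => by simp⟩

lemma Lpos_univ (m : ℕ) : Lpos m (fun _ => (Finset.univ : Finset (Fin m))) = CELS m := by
  rw [Lpos, CELS]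
  exact Nat.card_congr (Equiv.subtypeEquivRight fun A => by
    constructor
    · rintro ⟨h1, h2, h3⟩; exact ⟨h1, h3⟩
    · rintro ⟨h1, h3⟩; exact ⟨h1, patternOf_univ h1, h3⟩)

lemma Lneg_univ (m : ℕ) : Lneg m (fun _ => (Finset.univ : Finset (Fin m))) = COLS m := by
  rw [Lneg, COLS]
  exact Nat.card_congr (Equiv.subtypeEquivRight fun A => by
    constructor
    · rintro ⟨h1, h2, h3⟩; exact ⟨h1, h3⟩
    · rintro ⟨h1, h3⟩; exact ⟨h1, patternOf_univ h1, h3⟩)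


open scoped Classical in
/-- Let `m` be a positive even integer satisfying the Alon–Tarsi/Huang–Rota column Latin
square property `#CELS(m) ≠ #COLS(m)`.  Then for every `1 ≤ i ≤ m` there is a pattern `𝒜`
of size `(i,m)` with `#L^+_𝒜 ≠ #L^-_𝒜`, and consequently
`∑_{𝒜 ∈ S(i,m)} (#L^+_𝒜 − #L^-_𝒜)² > 0`. -/
theorem alonTarsi_gives_positive_pattern_sum (m : ℕ) (hm : 0 < m) (heven : Even m)
    (h : CELS m ≠ COLS m) :
    ∀ i : ℕ, 1 ≤ i → i ≤ m →
      (∃ P : Fin m → Finset (Fin m), IsPattern i P ∧ Lpos i P ≠ Lneg i P) ∧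
      0 < ∑ P ∈ Finset.univ.filter (fun P : Fin m → Finset (Fin m) => IsPattern i P),
            (((Lpos i P : ℤ) - (Lneg i P : ℤ)) ^ 2) := by
  have key : ∀ k, k ≤ m → ∃ P : Fin m → Finset (Fin m),
      IsPattern (m - k) P ∧ Dsgn (m - k) P ≠ 0 := by
    intro k
    induction k with
    | zero =>
      intro _
      refine ⟨fun _ => Finset.univ, by simpa using isPattern_univ m, ?_⟩
      rw [Nat.sub_zero, ← lpos_sub_lneg, Lpos_univ, Lneg_univ]
      intro hc
      exact h (by exact_mod_cast sub_eq_zero.1 hc)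
    | succ k ih =>
      intro hk1
      by_contra hc
      push_neg at hc
      obtain ⟨P, hPpat, hPne⟩ := ih (Nat.le_of_succ_le hk1)
      have hmk : m - k = (m - (k + 1)) + 1 := by omega
      apply hPne
      rw [hmk] at hPpat ⊢
      exact Dsgn_succ_eq_zero P hPpat (fun Q hQ => hc Q hQ)
  intro i hi him
  obtain ⟨P, hPpat, hPne⟩ := by
    have := key (m - i) (Nat.sub_le m i)
    rwa [Nat.sub_sub_self him] at this
  have hne : (Lpos i P : ℤ) - (Lneg i P : ℤ) ≠ 0 := by
    rw [lpos_sub_lneg]; exact hPne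
  constructor
  · exact ⟨P, hPpat, fun hc => hne (by rw [hc]; ring)⟩
  · refine Finset.sum_pos' (fun Q _ => sq_nonneg _) ⟨P, ?_, ?_⟩
    · simp [hPpat]
    · exact lt_of_le_of_ne (sq_nonneg _) (Ne.symm (pow_ne_zero 2 hne))
end
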